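/- Let D be a set, k : D × D → ℝ a symmetric positive semidefinite kernel (for every n ∈ ℕ, all x₁,…,xₙ ∈ D and all real c₁,…,cₙ, ∑_{i,j=1}^n c_i c_j k(x_i,x_j) ≥ 0), 𝒰 the set of finite subsets of ℕ, γ : 𝒰 → [0,∞), and 𝒳 := { x ∈ D^ℕ : ∑_{u∈𝒰} γ_u ∏_{j∈u} k(x_j,x_j) < ∞ }. Then K_γ(x,y) := ∑_{u∈𝒰} γ_u ∏_{j∈u} k(x_j,y_j) converges absolutely for all x, y ∈ 𝒳, is symmetric, and is positive semidefinite on 𝒳: for every n ∈ ℕ, all x⁽¹⁾,…,x⁽ⁿ⁾ ∈ 𝒳 and all reals c₁,…,cₙ, ∑_{i,j=1}^n c_i c_j K_γ(x⁽ⁱ⁾, x⁽ʲ⁾) ≥ 0. -/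

import Mathlib

/-- A real symmetric matrix with nonnegative quadratic form is positive semidefinite. -/
lemma psd_of_quad {n : ℕ} (M : Matrix (Fin n) (Fin n) ℝ)
    (hs : ∀ i j, M i j = M j i)
    (hq : ∀ c : Fin n → ℝ, 0 ≤ ∑ i, ∑ j, c i * c j * M i j) :
    M.PosSemidef := by
  refine Matrix.PosSemidef.of_dotProduct_mulVec_nonneg ?_ ?_
  · ext i j
    simp [Matrix.conjTranspose_apply, hs i j]
  · intro x
    have := hq x
    simp only [dotProduct, Matrix.mulVec, star_trivial]
    calc (0:ℝ) ≤ ∑ i, ∑ j, x i * x j * M i j := hq x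
      _ = ∑ i, x i * ∑ j, M i j * x j := by
          refine Finset.sum_congr rfl fun i _ => ?_
          rw [Finset.mul_sum]
          exact Finset.sum_congr rfl fun j _ => by ring

open scoped MatrixOrder in
/-- Schur product: hadamard product of a PSD matrix with a quadratic-form-PSD kernel
is quadratic-form PSD. -/
lemma schur_quad {n : ℕ} {A : Matrix (Fin n) (Fin n) ℝ} (hA : A.PosSemidef)
    (B : Fin n → Fin n → ℝ)
    (hB : ∀ c : Fin n → ℝ, 0 ≤ ∑ i, ∑ j, c i * c j * B i j)
    (c : Fin n → ℝ) : 0 ≤ ∑ i, ∑ j, c i * c j * (A i j * B i j) := by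
  set S := CFC.sqrt A with hSdef
  have hSsym : ∀ i j, S i j = S j i := by
    intro i j
    have h : S.IsHermitian := by simpa using (CFC.sqrt_nonneg A).1
    calc S i j = star (S j i) := (Matrix.IsHermitian.apply h i j).symm
      _ = S j i := rfl
  have key : ∀ i j, A i j = ∑ r, S i r * S j r := by
    intro i j
    rw [← CFC.sqrt_mul_sqrt_self A hA.nonneg]
    rw [Matrix.mul_apply]
    refine Finset.sum_congr rfl fun r _ => ?_
    simp only [← hSdef]
    rw [hSsym r j]
  have expand : ∀ i j, c i * c j * (A i j * B i j)
      = ∑ r, (c i * S i r) * (c j * S j r) * B i j := by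
    intro i j
    rw [key i j, Finset.sum_mul, Finset.mul_sum]
    exact Finset.sum_congr rfl fun r _ => by ring
  calc (0:ℝ) ≤ ∑ r, ∑ i, ∑ j, (c i * S i r) * (c j * S j r) * B i j :=
        Finset.sum_nonneg fun r _ => hB (fun i => c i * S i r)
    _ = ∑ i, ∑ r, ∑ j, (c i * S i r) * (c j * S j r) * B i j := Finset.sum_comm
    _ = ∑ i, ∑ j, ∑ r, (c i * S i r) * (c j * S j r) * B i j :=
        Finset.sum_congr rfl fun i _ => Finset.sum_comm
    _ = ∑ i, ∑ j, c i * c j * (A i j * B i j) := by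
        refine Finset.sum_congr rfl fun i _ => Finset.sum_congr rfl fun j _ => ?_
        rw [expand i j]

/-- The product kernel `∏_{l∈u} k(x_i(l), x_j(l))` is quadratic-form PSD. -/
lemma prod_kernel_psd {D : Type*} (k : D → D → ℝ)
    (hsymm : ∀ x y, k x y = k y x)
    (hpsd : ∀ (n : ℕ) (x : Fin n → D) (c : Fin n → ℝ),
      0 ≤ ∑ i, ∑ j, c i * c j * k (x i) (x j))
    {n : ℕ} (x : Fin n → (ℕ → D)) (u : Finset ℕ) (c : Fin n → ℝ) :
    0 ≤ ∑ i, ∑ j, c i * c j * ∏ l ∈ u, k (x i l) (x j l) := by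
  induction u using Finset.induction_on generalizing c with
  | empty =>
      simp only [Finset.prod_empty, mul_one]
      have : ∑ i, ∑ j, c i * c j = (∑ i, c i) * (∑ j, c j) := by
        rw [Finset.sum_mul_sum]
      rw [this]
      exact mul_self_nonneg _
  | insert a s ha ih =>
      have hA : (Matrix.of fun i j => k (x i a) (x j a)).PosSemidef := by
        refine psd_of_quad _ (fun i j => hsymm _ _) (fun c => ?_)
        exact hpsd n (fun i => x i a) c
      have := schur_quad hA (fun i j => ∏ l ∈ s, k (x i l) (x j l)) ih c
      simpa [Finset.prod_insert ha] using this

/-- The weighted kernel `K_γ(x,y) = ∑_u γ_u ∏_{j∈u} k(x_j,y_j)` of a symmetric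
positive semidefinite kernel `k` converges absolutely on the domain
`𝒳 = {x : ∑_u γ_u ∏_{j∈u} k(x_j,x_j) < ∞}`, is symmetric, and is positive
semidefinite on `𝒳`. -/
theorem stmt14 {D : Type*} (k : D → D → ℝ)
    (hsymm : ∀ x y, k x y = k y x)
    (hpsd : ∀ (n : ℕ) (x : Fin n → D) (c : Fin n → ℝ),
      0 ≤ ∑ i, ∑ j, c i * c j * k (x i) (x j))
    (γ : Finset ℕ → ℝ) (hγ : ∀ u, 0 ≤ γ u) :
    (∀ x y : ℕ → D,
        (Summable fun u : Finset ℕ => γ u * ∏ j ∈ u, k (x j) (x j)) →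
        (Summable fun u : Finset ℕ => γ u * ∏ j ∈ u, k (y j) (y j)) →
        Summable fun u : Finset ℕ => |γ u * ∏ j ∈ u, k (x j) (y j)|) ∧
      (∀ x y : ℕ → D,
        (∑' u : Finset ℕ, γ u * ∏ j ∈ u, k (x j) (y j))
          = ∑' u : Finset ℕ, γ u * ∏ j ∈ u, k (y j) (x j)) ∧
      (∀ (n : ℕ) (x : Fin n → (ℕ → D)) (c : Fin n → ℝ),
        (∀ i, Summable fun u : Finset ℕ => γ u * ∏ j ∈ u, k (x i j) (x i j)) →
        0 ≤ ∑ i, ∑ j, c i * c j *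
              ∑' u : Finset ℕ, γ u * ∏ l ∈ u, k (x i l) (x j l)) := by
  -- basic facts about k
  have hdiag : ∀ x : D, 0 ≤ k x x := by
    intro x
    have := hpsd 1 (fun _ => x) (fun _ => 1)
    simpa using this
  have hCS : ∀ x y : D, (k x y) ^ 2 ≤ k x x * k y y := by
    intro x y
    have hquad : ∀ t : ℝ, 0 ≤ k x x * (t * t) + (2 * k x y) * t + k y y := by
      intro t
      have := hpsd 2 ![x, y] ![t, 1]
      simp [Fin.sum_univ_two] at this
      rw [← hsymm x y] at this
      nlinarith [this]
    have hd := discrim_le_zero hquad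
    rw [discrim] at hd
    nlinarith [hd]
  -- bound on products
  have hbound : ∀ (x y : ℕ → D) (u : Finset ℕ),
      |∏ j ∈ u, k (x j) (y j)|
        ≤ ((∏ j ∈ u, k (x j) (x j)) + ∏ j ∈ u, k (y j) (y j)) / 2 := by
    intro x y u
    set a := ∏ j ∈ u, k (x j) (y j) with ha
    set b := ∏ j ∈ u, k (x j) (x j) with hb
    set d := ∏ j ∈ u, k (y j) (y j) with hd
    have hb0 : 0 ≤ b := Finset.prod_nonneg fun j _ => hdiag _
    have hd0 : 0 ≤ d := Finset.prod_nonneg fun j _ => hdiag _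
    have hsq : a ^ 2 ≤ b * d := by
      have h1 : a ^ 2 = ∏ j ∈ u, (k (x j) (y j)) ^ 2 := by
        rw [ha, Finset.prod_pow]
      have h2 : (∏ j ∈ u, (k (x j) (y j)) ^ 2) ≤ ∏ j ∈ u, (k (x j) (x j) * k (y j) (y j)) := by
        refine Finset.prod_le_prod (fun j _ => sq_nonneg _) (fun j _ => hCS _ _)
      have h3 : (∏ j ∈ u, (k (x j) (x j) * k (y j) (y j))) = b * d := by
        rw [Finset.prod_mul_distrib]
      rw [h1]; rw [h3] at h2; exact h2
    have habs : |a| ^ 2 = a ^ 2 := sq_abs a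
    nlinarith [abs_nonneg a, sq_nonneg (b - d), sq_nonneg (b + d - 2 * |a|), habs, hsq]
  -- Part 1: absolute convergence
  have part1 : ∀ x y : ℕ → D,
      (Summable fun u : Finset ℕ => γ u * ∏ j ∈ u, k (x j) (x j)) →
      (Summable fun u : Finset ℕ => γ u * ∏ j ∈ u, k (y j) (y j)) →
      Summable fun u : Finset ℕ => |γ u * ∏ j ∈ u, k (x j) (y j)| := by
    intro x y hx hy
    refine Summable.of_nonneg_of_le (fun u => abs_nonneg _) (fun u => ?_)
      (((hx.add hy).div_const 2))
    rw [abs_mul, abs_of_nonneg (hγ u)]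
    have := mul_le_mul_of_nonneg_left (hbound x y u) (hγ u)
    calc γ u * |∏ j ∈ u, k (x j) (y j)|
        ≤ γ u * (((∏ j ∈ u, k (x j) (x j)) + ∏ j ∈ u, k (y j) (y j)) / 2) := this
      _ = (γ u * ∏ j ∈ u, k (x j) (x j) + γ u * ∏ j ∈ u, k (y j) (y j)) / 2 := by ring
  refine ⟨part1, ?_, ?_⟩
  · -- symmetry
    intro x y
    refine tsum_congr fun u => ?_
    congr 1
    exact Finset.prod_congr rfl fun j _ => hsymm _ _
  · -- positive semidefiniteness
    intro n x c hX
    have hsumF : ∀ i j : Fin n,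
        Summable fun u : Finset ℕ => γ u * ∏ l ∈ u, k (x i l) (x j l) := fun i j =>
      (part1 (x i) (x j) (hX i) (hX j)).of_abs
    have hswap := Summable.tsum_finsetSum (α := ℝ)
      (f := fun (p : Fin n × Fin n) (u : Finset ℕ) =>
        c p.1 * c p.2 * (γ u * ∏ l ∈ u, k (x p.1 l) (x p.2 l)))
      (s := Finset.univ)
      (fun p _ => (hsumF p.1 p.2).mul_left (c p.1 * c p.2))
    have key : (∑ i, ∑ j, c i * c j * ∑' u : Finset ℕ, γ u * ∏ l ∈ u, k (x i l) (x j l))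
        = ∑' u : Finset ℕ, ∑ p : Fin n × Fin n,
            c p.1 * c p.2 * (γ u * ∏ l ∈ u, k (x p.1 l) (x p.2 l)) := by
      rw [hswap, Fintype.sum_prod_type]
      refine Finset.sum_congr rfl fun i _ => Finset.sum_congr rfl fun j _ => ?_
      rw [tsum_mul_left]
    rw [key]
    refine tsum_nonneg fun u => ?_
    have heq : (∑ p : Fin n × Fin n, c p.1 * c p.2 * (γ u * ∏ l ∈ u, k (x p.1 l) (x p.2 l)))
        = γ u * ∑ i, ∑ j, c i * c j * ∏ l ∈ u, k (x i l) (x j l) := by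
      rw [Fintype.sum_prod_type, Finset.mul_sum]
      refine Finset.sum_congr rfl fun i _ => ?_
      rw [Finset.mul_sum]
      refine Finset.sum_congr rfl fun j _ => by ring
    rw [heq]
    exact mul_nonneg (hγ u) (prod_kernel_psd k hsymm hpsd x u c)
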